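/- arXiv:0902.1870 — 2 statements merged into one kernel-verified Lean document; each statement's English description precedes it below -/
import Mathlib

section
/- Let 1/2 < δ < 1 and let f : (0,1] → R be given by f(x) = x^{-δ}, extended to T = R/Z. Then f ∈ L¹(T), but the sequence of Riemann sums R_n f(x) = (1/n) Σ_{j=0}^{n-1} f(x + j/n) fails to converge to ∫ f for almost every x; in fact limsup_n R_n f(x) = +∞ for almost every x ∈ T. -/
open MeasureTheory Filter Topology


section Aux
variable {x : ℝ}

private lemma fract_pos_of_irrational (hx : Irrational x) {n : ℕ} (hn : n ≠ 0) :
    0 < Int.fract ((n : ℝ) * x) := by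
  rcases (Int.fract_nonneg ((n : ℝ) * x)).lt_or_eq with h | h
  · exact h
  · exfalso
    have hirr : Irrational ((n : ℝ) * x) := hx.natCast_mul hn
    have h2 := Int.floor_add_fract ((n : ℝ) * x)
    rw [← h, add_zero] at h2
    exact hirr.ne_int _ h2.symm

private lemma fract_add_split (x : ℝ) (p q : ℕ) :
    Int.fract (((p + q : ℕ) : ℝ) * x)
      = Int.fract (Int.fract ((p : ℝ) * x) + Int.fract ((q : ℝ) * x)) := by
  refine Int.fract_eq_fract.2 ⟨⌊(p : ℝ) * x⌋ + ⌊(q : ℝ) * x⌋, ?_⟩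
  have h1 := Int.floor_add_fract ((p : ℝ) * x)
  have h2 := Int.floor_add_fract ((q : ℝ) * x)
  push_cast
  ring_nf
  push_cast at h1 h2 ⊢
  linarith

private lemma fract_add_lt (x : ℝ) (p q : ℕ)
    (h : Int.fract ((p : ℝ) * x) + Int.fract ((q : ℝ) * x) < 1) :
    Int.fract (((p + q : ℕ) : ℝ) * x)
      = Int.fract ((p : ℝ) * x) + Int.fract ((q : ℝ) * x) := by
  rw [fract_add_split]
  exact Int.fract_eq_self.2 ⟨add_nonneg (Int.fract_nonneg _) (Int.fract_nonneg _), h⟩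

private lemma fract_add_ge (x : ℝ) (p q : ℕ)
    (h : 1 ≤ Int.fract ((p : ℝ) * x) + Int.fract ((q : ℝ) * x)) :
    Int.fract (((p + q : ℕ) : ℝ) * x)
      = Int.fract ((p : ℝ) * x) + Int.fract ((q : ℝ) * x) - 1 := by
  rw [fract_add_split]
  have h1 := Int.fract_lt_one ((p : ℝ) * x)
  have h2 := Int.fract_lt_one ((q : ℝ) * x)
  have e : Int.fract (Int.fract ((p:ℝ)*x) + Int.fract ((q:ℝ)*x))
      = Int.fract (Int.fract ((p:ℝ)*x) + Int.fract ((q:ℝ)*x) - ((1:ℤ):ℝ)) :=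
    (Int.fract_sub_intCast _ _).symm
  rw [e]
  push_cast
  exact Int.fract_eq_self.2 ⟨by linarith, by linarith⟩

private lemma uv_ne (hx : Irrational x) {p q : ℕ} (hp : p ≠ 0) (hq : q ≠ 0) :
    Int.fract ((p : ℝ) * x) ≠ 1 - Int.fract ((q : ℝ) * x) := by
  intro h
  have h0 : Int.fract (((p + q : ℕ) : ℝ) * x) = 0 := by
    rw [fract_add_split]
    have : Int.fract ((p:ℝ)*x) + Int.fract ((q:ℝ)*x) = 1 := by linarith
    rw [this, Int.fract_one]
  exact absurd h0 (ne_of_gt (fract_pos_of_irrational hx (by omega : p + q ≠ 0)))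

open scoped Classical in
private noncomputable def PQ (x : ℝ) : ℕ → ℕ × ℕ
  | 0 => (1, 1)
  | k + 1 =>
      if Int.fract (((PQ x k).1 : ℝ) * x) < 1 - Int.fract (((PQ x k).2 : ℝ) * x)
      then ((PQ x k).1, (PQ x k).1 + (PQ x k).2)
      else ((PQ x k).1 + (PQ x k).2, (PQ x k).2)

end Aux

section Aux2
variable {x : ℝ}

private lemma PQ_succ (x : ℝ) (k : ℕ) :
    PQ x (k + 1) =
      if Int.fract (((PQ x k).1 : ℝ) * x) < 1 - Int.fract (((PQ x k).2 : ℝ) * x)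
      then ((PQ x k).1, (PQ x k).1 + (PQ x k).2)
      else ((PQ x k).1 + (PQ x k).2, (PQ x k).2) := by
  rw [PQ]

private lemma PQ_good (hx : Irrational x) (k : ℕ) :
    0 < (PQ x k).1 ∧ 0 < (PQ x k).2 ∧
      ((PQ x k).1 : ℝ) * (1 - Int.fract (((PQ x k).2 : ℝ) * x))
        + ((PQ x k).2 : ℝ) * Int.fract (((PQ x k).1 : ℝ) * x) = 1 := by
  induction k with
  | zero =>
      refine ⟨one_pos, one_pos, ?_⟩
      simp only [PQ]
      push_cast
      ring
  | succ k ih =>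
      obtain ⟨hp, hq, hinv⟩ := ih
      set p := (PQ x k).1 with hpdef
      set q := (PQ x k).2 with hqdef
      rw [PQ_succ]
      by_cases h : Int.fract ((p : ℝ) * x) < 1 - Int.fract ((q : ℝ) * x)
      · rw [if_pos h]
        have hadd : Int.fract (((p + q : ℕ) : ℝ) * x)
            = Int.fract ((p : ℝ) * x) + Int.fract ((q : ℝ) * x) :=
          fract_add_lt x p q (by linarith)
        refine ⟨hp, by omega, ?_⟩
        show (p : ℝ) * (1 - Int.fract (((p + q : ℕ) : ℝ) * x))
            + ((p + q : ℕ) : ℝ) * Int.fract ((p : ℝ) * x) = 1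
        rw [hadd]
        push_cast at hinv ⊢
        linear_combination hinv
      · rw [if_neg h]
        have hne := uv_ne hx (by omega : p ≠ 0) (by omega : q ≠ 0)
        have hgt : 1 - Int.fract ((q : ℝ) * x) < Int.fract ((p : ℝ) * x) :=
          lt_of_le_of_ne (not_lt.1 h) (by
            intro hE; exact hne hE.symm)
        have hadd : Int.fract (((p + q : ℕ) : ℝ) * x)
            = Int.fract ((p : ℝ) * x) + Int.fract ((q : ℝ) * x) - 1 :=
          fract_add_ge x p q (by linarith)
        refine ⟨by omega, hq, ?_⟩
        show ((p + q : ℕ) : ℝ) * (1 - Int.fract ((q : ℝ) * x))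
            + (q : ℝ) * Int.fract (((p + q : ℕ) : ℝ) * x) = 1
        rw [hadd]
        push_cast at hinv ⊢
        linear_combination hinv

private lemma PQ_fst_mono (x : ℝ) : Monotone fun k => (PQ x k).1 := by
  apply monotone_nat_of_le_succ
  intro k
  rw [PQ_succ]
  split <;> simp

end Aux2

section Aux3
variable {x : ℝ}

private lemma exists_qstep (hx : Irrational x) (K : ℕ) :
    ∃ k, K ≤ k ∧
      Int.fract (((PQ x k).1 : ℝ) * x) < 1 - Int.fract (((PQ x k).2 : ℝ) * x) := by
  by_contra hcon
  push_neg at hcon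
  set v : ℝ := 1 - Int.fract (((PQ x K).2 : ℝ) * x) with hvdef
  have hv : 0 < v := sub_pos.2 (Int.fract_lt_one _)
  have hconst : ∀ m : ℕ, (PQ x (K + m)).2 = (PQ x K).2 ∧
      Int.fract (((PQ x (K + m)).1 : ℝ) * x)
        = Int.fract (((PQ x K).1 : ℝ) * x) - m * v := by
    intro m
    induction m with
    | zero => simp
    | succ m ih =>
        obtain ⟨hQ, hU⟩ := ih
        have hnotlt := not_lt.2 (hcon (K + m) (by omega))
        have hstep : PQ x (K + (m + 1))
            = ((PQ x (K + m)).1 + (PQ x (K + m)).2, (PQ x (K + m)).2) := by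
          have : K + (m + 1) = (K + m) + 1 := by omega
          rw [this, PQ_succ, if_neg hnotlt]
        have hge : 1 ≤ Int.fract (((PQ x (K + m)).1 : ℝ) * x)
            + Int.fract (((PQ x (K + m)).2 : ℝ) * x) := by
          have := not_lt.1 hnotlt
          linarith
        have hadd := fract_add_ge x (PQ x (K + m)).1 (PQ x (K + m)).2 hge
        constructor
        · rw [hstep]
          exact hQ
        · rw [hstep]
          show Int.fract ((((PQ x (K + m)).1 + (PQ x (K + m)).2 : ℕ) : ℝ) * x) = _
          rw [hadd, hU, hQ]
          push_cast
          ring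
  obtain ⟨m, hm⟩ := exists_nat_gt (Int.fract (((PQ x K).1 : ℝ) * x) / v)
  have hm' : Int.fract (((PQ x K).1 : ℝ) * x) < m * v := (div_lt_iff₀ hv).1 hm
  obtain ⟨hQ, hU⟩ := hconst m
  have hPpos : 0 < (PQ x (K + m)).1 := (PQ_good hx (K + m)).1
  have hfp : 0 < Int.fract (((PQ x (K + m)).1 : ℝ) * x) :=
    fract_pos_of_irrational hx (by omega)
  rw [hU] at hfp
  linarith

private lemma exists_pstep (hx : Irrational x) (K : ℕ) :
    ∃ k, K ≤ k ∧
      ¬ Int.fract (((PQ x k).1 : ℝ) * x) < 1 - Int.fract (((PQ x k).2 : ℝ) * x) := by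
  by_contra hcon
  push_neg at hcon
  set u : ℝ := Int.fract (((PQ x K).1 : ℝ) * x) with hudef
  have hP0 : 0 < (PQ x K).1 := (PQ_good hx K).1
  have hu : 0 < u := fract_pos_of_irrational hx (by omega)
  have hconst : ∀ m : ℕ, (PQ x (K + m)).1 = (PQ x K).1 ∧
      Int.fract (((PQ x (K + m)).2 : ℝ) * x)
        = Int.fract (((PQ x K).2 : ℝ) * x) + m * u := by
    intro m
    induction m with
    | zero => simp
    | succ m ih =>
        obtain ⟨hP, hV⟩ := ih
        have hlt := hcon (K + m) (by omega)
        have hstep : PQ x (K + (m + 1))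
            = ((PQ x (K + m)).1, (PQ x (K + m)).1 + (PQ x (K + m)).2) := by
          have : K + (m + 1) = (K + m) + 1 := by omega
          rw [this, PQ_succ, if_pos hlt]
        have hltsum : Int.fract (((PQ x (K + m)).1 : ℝ) * x)
            + Int.fract (((PQ x (K + m)).2 : ℝ) * x) < 1 := by linarith
        have hadd := fract_add_lt x (PQ x (K + m)).1 (PQ x (K + m)).2 hltsum
        constructor
        · rw [hstep]
          exact hP
        · rw [hstep]
          show Int.fract ((((PQ x (K + m)).1 + (PQ x (K + m)).2 : ℕ) : ℝ) * x) = _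
          rw [hadd, hV, hP]
          push_cast
          ring
  obtain ⟨m, hm⟩ := exists_nat_gt (1 / u)
  have hm' : 1 < m * u := by
    rw [div_lt_iff₀ hu] at hm
    linarith
  obtain ⟨hP, hV⟩ := hconst m
  have hlt1 : Int.fract (((PQ x (K + m)).2 : ℝ) * x) < 1 := Int.fract_lt_one _
  rw [hV] at hlt1
  have := Int.fract_nonneg (((PQ x K).2 : ℝ) * x)
  linarith

private lemma P_unbounded (hx : Irrational x) : ∀ N : ℕ, ∃ k, N ≤ (PQ x k).1 := by
  intro N
  induction N with
  | zero => exact ⟨0, by omega⟩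
  | succ N ih =>
      obtain ⟨k, hk⟩ := ih
      obtain ⟨k', hkk', hcond⟩ := exists_pstep hx k
      have hq' : 0 < (PQ x k').2 := (PQ_good hx k').2.1
      have hstep : (PQ x (k' + 1)).1 = (PQ x k').1 + (PQ x k').2 := by
        rw [PQ_succ, if_neg hcond]
      have hmono : (PQ x k).1 ≤ (PQ x k').1 := PQ_fst_mono x hkk'
      exact ⟨k' + 1, by omega⟩

private lemma key_approx (hx : Irrational x) (N : ℕ) :
    ∃ n : ℕ, N ≤ n ∧ 0 < n ∧ (n : ℝ) * Int.fract ((n : ℝ) * x) < 1 := by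
  obtain ⟨k0, hk0⟩ := P_unbounded hx N
  obtain ⟨k, hk0k, hcond⟩ := exists_qstep hx k0
  obtain ⟨hp, hq, hinv⟩ := PQ_good hx k
  refine ⟨(PQ x k).1, le_trans hk0 (PQ_fst_mono x hk0k), hp, ?_⟩
  have h1 : ((PQ x k).1 : ℝ) * Int.fract (((PQ x k).1 : ℝ) * x)
      < ((PQ x k).1 : ℝ) * (1 - Int.fract (((PQ x k).2 : ℝ) * x)) :=
    mul_lt_mul_of_pos_left hcond (by exact_mod_cast hp)
  have h2 : 0 ≤ ((PQ x k).2 : ℝ) * Int.fract (((PQ x k).1 : ℝ) * x) :=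
    mul_nonneg (by positivity) (Int.fract_nonneg _)
  linarith

end Aux3

private lemma exists_index (x : ℝ) {n : ℕ} (hn : 0 < n) :
    ∃ j : ℕ, j < n ∧ Int.fract (x + (j : ℝ) / (n : ℝ)) = Int.fract ((n : ℝ) * x) / n := by
  have hnR : (0 : ℝ) < n := by exact_mod_cast hn
  set F : ℤ := ⌊(n : ℝ) * x⌋ with hF
  have h1 : 0 ≤ (-F) % (n : ℤ) := Int.emod_nonneg _ (by exact_mod_cast hn.ne')
  have h2 : (-F) % (n : ℤ) < (n : ℤ) := Int.emod_lt_of_pos _ (by exact_mod_cast hn)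
  refine ⟨((-F) % (n : ℤ)).toNat, by omega, ?_⟩
  have hself : Int.fract (Int.fract ((n : ℝ) * x) / n) = Int.fract ((n : ℝ) * x) / n := by
    refine Int.fract_eq_self.2 ⟨div_nonneg (Int.fract_nonneg _) hnR.le, ?_⟩
    rw [div_lt_one hnR]
    exact lt_of_lt_of_le (Int.fract_lt_one _) (by exact_mod_cast hn)
  rw [← hself]
  refine Int.fract_eq_fract.2 ⟨-((-F) / (n : ℤ)), ?_⟩
  have hmod : (-F) % (n : ℤ) = -F - (n : ℤ) * ((-F) / (n : ℤ)) := Int.emod_def _ _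
  have hFr : (F : ℝ) + Int.fract ((n : ℝ) * x) = (n : ℝ) * x := Int.floor_add_fract _
  have hcastZ : ((((-F) % (n : ℤ)).toNat : ℕ) : ℤ) = (-F) % (n : ℤ) := Int.toNat_of_nonneg h1
  have hcast : ((((-F) % (n : ℤ)).toNat : ℕ) : ℝ) = (((-F) % (n : ℤ) : ℤ) : ℝ) := by
    exact_mod_cast hcastZ
  have hmodR : (((-F) % (n : ℤ) : ℤ) : ℝ)
      = -(F : ℝ) - (n : ℝ) * (((-F) / (n : ℤ) : ℤ) : ℝ) := by
    rw [hmod]; push_cast; ring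
  have hne : (n : ℝ) ≠ 0 := ne_of_gt hnR
  field_simp
  push_cast
  rw [mul_comm x (n:ℝ)]
  linarith [hcast, hmodR, hFr]


/-- For `1/2 < δ < 1`, the function `f(x) = x^{-δ}` on `(0,1]`,
extended periodically to `T = ℝ/ℤ` (via the fractional part), is Lebesgue integrable,
but the Riemann sums `R_n f(x) = (1/n) ∑_{j<n} f({x + j/n})` fail to converge to `∫ f`
for almost every `x`: in fact `limsup_n R_n f(x) = +∞` for almost every `x`. -/
theorem riemann_sums_divergence (δ : ℝ) (hδ₁ : 1 / 2 < δ) (hδ₂ : δ < 1)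
    (f : ℝ → ℝ) (hf : ∀ x : ℝ, f x = Int.fract x ^ (-δ)) :
    IntegrableOn f (Set.Ioc (0 : ℝ) 1) volume ∧
      ∀ᵐ x : ℝ,
        (¬ Tendsto (fun n : ℕ => (n : ℝ)⁻¹ * ∑ j ∈ Finset.range n, f (x + (j : ℝ) / (n : ℝ)))
            atTop (𝓝 (∫ t in Set.Ioc (0 : ℝ) 1, f t))) ∧
        ∀ M : ℝ, ∃ᶠ n : ℕ in atTop,
          M < (n : ℝ)⁻¹ * ∑ j ∈ Finset.range n, f (x + (j : ℝ) / (n : ℝ)) := by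
  have hδ0 : 0 < δ := by linarith
  constructor
  · have h := intervalIntegral.intervalIntegrable_rpow' (a := 0) (b := 1) (r := -δ)
      (by linarith)
    refine h.1.congr_fun_ae ?_
    have h2 : ∀ᵐ t : ℝ, t ≠ (1 : ℝ) := by
      rw [ae_iff]
      have : {t : ℝ | ¬ t ≠ (1 : ℝ)} = {(1 : ℝ)} := by ext t; simp
      rw [this]
      exact measure_singleton 1
    have h3 := ae_restrict_of_ae (μ := volume) (s := Set.Ioc (0 : ℝ) 1) h2
    have h4 : ∀ᵐ t ∂(volume.restrict (Set.Ioc (0 : ℝ) 1)), t ∈ Set.Ioc (0 : ℝ) 1 :=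
      ae_restrict_mem measurableSet_Ioc
    filter_upwards [h3, h4] with t ht hmem
    rw [hf t, Int.fract_eq_self.2 ⟨hmem.1.le, lt_of_le_of_ne hmem.2 ht⟩]
  · have hae : ∀ᵐ x : ℝ, Irrational x := by
      have hc : (Set.range ((↑) : ℚ → ℝ)).Countable := Set.countable_range _
      have h0 : volume (Set.range ((↑) : ℚ → ℝ)) = 0 := hc.measure_zero _
      have hset : {x : ℝ | ¬ Irrational x} = Set.range ((↑) : ℚ → ℝ) := by
        ext t; simp [Irrational]
      rw [ae_iff, hset]
      exact h0
    filter_upwards [hae] with x hx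
    have key2 : ∀ M : ℝ, ∃ᶠ n : ℕ in atTop,
        M < (n : ℝ)⁻¹ * ∑ j ∈ Finset.range n, f (x + (j : ℝ) / (n : ℝ)) := by
      intro M
      have h2δ : 0 < 2 * δ - 1 := by linarith
      have hev : ∀ᶠ y : ℝ in atTop, M < y ^ (2 * δ - 1) :=
        (tendsto_rpow_atTop h2δ).eventually_gt_atTop M
      have hevn : ∀ᶠ n : ℕ in atTop, M < (n : ℝ) ^ (2 * δ - 1) :=
        tendsto_natCast_atTop_atTop.eventually hev
      rw [frequently_atTop]
      intro N
      obtain ⟨K, hK⟩ := eventually_atTop.1 hevn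
      obtain ⟨n, hnN, hn0, hna⟩ := key_approx hx (max N K)
      refine ⟨n, le_trans (le_max_left _ _) hnN, ?_⟩
      have hb : (0 : ℝ) < n := by exact_mod_cast hn0
      set a := Int.fract ((n : ℝ) * x) with hadef
      have ha0 : 0 < a := fract_pos_of_irrational hx hn0.ne'
      obtain ⟨j, hjn, hjf⟩ := exists_index x hn0
      have hterm : ∀ i ∈ Finset.range n, 0 ≤ f (x + (i : ℝ) / (n : ℝ)) := fun i _ => by
        rw [hf]; exact Real.rpow_nonneg (Int.fract_nonneg _) _
      have hsingle : f (x + (j : ℝ) / (n : ℝ))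
          ≤ ∑ i ∈ Finset.range n, f (x + (i : ℝ) / (n : ℝ)) :=
        Finset.single_le_sum hterm (Finset.mem_range.2 hjn)
      have hfj : f (x + (j : ℝ) / (n : ℝ)) = (a / n) ^ (-δ) := by rw [hf, hjf]
      have ha' : a ≤ (n : ℝ)⁻¹ := by
        rw [← one_div]
        have : a < 1 / (n : ℝ) := by rw [lt_div_iff₀ hb]; linarith
        exact this.le
      have hstep1 : a / n ≤ (n : ℝ)⁻¹ * (n : ℝ)⁻¹ := by
        rw [div_eq_mul_inv]
        exact mul_le_mul_of_nonneg_right ha' (by positivity)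
      have hstep2 : ((n : ℝ)⁻¹ * (n : ℝ)⁻¹) ^ (-δ) ≤ (a / n) ^ (-δ) :=
        Real.rpow_le_rpow_of_nonpos (by positivity) hstep1 (by linarith)
      have he1 : (n : ℝ)⁻¹ * (n : ℝ)⁻¹ = (n : ℝ) ^ (-2 : ℝ) := by
        rw [Real.rpow_neg hb.le, show ((2 : ℝ)) = ((2 : ℕ) : ℝ) by norm_num,
          Real.rpow_natCast, pow_two, mul_inv]
      have he2 : ((n : ℝ) ^ (-2 : ℝ)) ^ (-δ) = (n : ℝ) ^ (2 * δ) := by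
        rw [← Real.rpow_mul hb.le]
        congr 1
        ring
      have he3 : (n : ℝ)⁻¹ * (n : ℝ) ^ (2 * δ) = (n : ℝ) ^ (2 * δ - 1) := by
        rw [← Real.rpow_neg_one (n : ℝ), ← Real.rpow_add hb]
        congr 1
        ring
      calc M < (n : ℝ) ^ (2 * δ - 1) := hK n (le_trans (le_max_right _ _) hnN)
        _ = (n : ℝ)⁻¹ * ((n : ℝ)⁻¹ * (n : ℝ)⁻¹) ^ (-δ) := by rw [he1, he2, he3]
        _ ≤ (n : ℝ)⁻¹ * (a / n) ^ (-δ) :=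
            mul_le_mul_of_nonneg_left hstep2 (by positivity)
        _ = (n : ℝ)⁻¹ * f (x + (j : ℝ) / (n : ℝ)) := by rw [hfj]
        _ ≤ _ := mul_le_mul_of_nonneg_left hsingle (by positivity)
    refine ⟨?_, key2⟩
    intro hT
    have hev := hT.eventually_lt_const (lt_add_one (∫ t in Set.Ioc (0 : ℝ) 1, f t))
    obtain ⟨n, h1, h2⟩ := ((key2 ((∫ t in Set.Ioc (0 : ℝ) 1, f t) + 1)).and_eventually hev).exists
    linarith
end

section
/- Let G be a compact group acting measure-preservingly on a probability space (X,μ), with Haar probability measure ρ. Then for every f ∈ L¹(X,μ), the conditional expectation of f with respect to the σ-field of G-invariant Borel sets satisfies E(f | I)(x) = ∫_G f(tx) dρ(t) for almost every x ∈ X. -/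
open MeasureTheory Filter Topology Pointwise
open scoped NNReal

/-- The σ-field of `G`-invariant measurable subsets of `X`. -/
def invariantSigma (G X : Type*) [Group G] [MulAction G X] [m : MeasurableSpace X] :
    MeasurableSpace X where
  MeasurableSet' A := MeasurableSet A ∧ ∀ t : G, t • A = A
  measurableSet_empty := ⟨MeasurableSet.empty, fun t => Set.smul_set_empty⟩
  measurableSet_compl := fun A hA =>
    ⟨hA.1.compl, fun t => by rw [Set.smul_set_compl, hA.2 t]⟩
  measurableSet_iUnion := fun s hs =>
    ⟨MeasurableSet.iUnion fun i => (hs i).1, fun t => by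
      rw [Set.smul_set_iUnion]; exact Set.iUnion_congr fun i => (hs i).2 t⟩

open scoped ENNReal

lemma haar_right_invariant {G : Type*} [Group G] [TopologicalSpace G] [IsTopologicalGroup G]
    [CompactSpace G] [MeasurableSpace G] [BorelSpace G]
    (ρ : Measure G) [ρ.IsHaarMeasure] [IsProbabilityMeasure ρ] :
    ρ.IsMulRightInvariant := by
  constructor
  intro s
  set μ' := Measure.map (· * s) ρ with hμ'
  have hmeas : Measurable (· * s) := measurable_mul_const s
  haveI : IsProbabilityMeasure μ' := Measure.isProbabilityMeasure_map hmeas.aemeasurable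
  haveI : μ'.IsMulLeftInvariant := by
    constructor
    intro g
    rw [hμ', Measure.map_map (measurable_const_mul g) hmeas]
    have : ((g * ·) ∘ (· * s)) = ((· * s) ∘ (g * ·)) := by
      funext x; simp [mul_assoc]
    rw [this, ← Measure.map_map hmeas (measurable_const_mul g),
      map_mul_left_eq_self]
  have h := Measure.isMulInvariant_eq_smul_of_compactSpace μ' ρ
  have huniv := congrArg (fun ν : Measure G => ν Set.univ) h
  simp only [measure_univ, Measure.smul_apply, smul_eq_mul, mul_one] at huniv
  have hc : μ'.haarScalarFactor ρ = 1 := by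
    have h2 : (μ'.haarScalarFactor ρ : ℝ≥0∞) = 1 := by
      simpa [ENNReal.smul_def] using huniv.symm
    exact_mod_cast h2
  rw [h, hc, one_smul]

section main
variable {G : Type*} [Group G] [TopologicalSpace G] [IsTopologicalGroup G]
    [CompactSpace G] [MeasurableSpace G] [BorelSpace G]
    {X : Type*} [MeasurableSpace X] [MulAction G X]

lemma map_smul_prod_eq {ρ : Measure G} [IsProbabilityMeasure ρ]
    (hact : Measurable fun p : G × X => p.1 • p.2)
    (ν : Measure X) [IsFiniteMeasure ν]
    (hν : ∀ t : G, Measure.map (fun x => t • x) ν = ν) :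
    Measure.map (fun p : G × X => p.1 • p.2) (ρ.prod ν) = ν := by
  ext A hA
  rw [Measure.map_apply hact hA, Measure.prod_apply (hact hA)]
  have hslice : ∀ t : G, ν (Prod.mk t ⁻¹' ((fun p : G × X => p.1 • p.2) ⁻¹' A)) = ν A := by
    intro t
    have ht : Measurable (fun x : X => t • x) := hact.comp measurable_prodMk_left
    have : (Prod.mk t ⁻¹' ((fun p : G × X => p.1 • p.2) ⁻¹' A)) = (fun x : X => t • x) ⁻¹' A :=
      rfl
    rw [this, ← Measure.map_apply ht hA, hν t]
  simp only [hslice, lintegral_const, measure_univ, mul_one]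

end main

/-- For a compact group `G` with Haar probability measure `ρ` acting
measurably and measure-preservingly on a probability space `(X,μ)`, the conditional
expectation of `f ∈ L¹(X,μ)` with respect to the σ-field of `G`-invariant Borel sets
equals `x ↦ ∫_G f(t•x) dρ(t)` almost everywhere. -/
theorem condexp_invariant_eq_orbital_average
    {G : Type*} [Group G] [TopologicalSpace G] [IsTopologicalGroup G]
    [CompactSpace G] [MeasurableSpace G] [BorelSpace G]
    (ρ : Measure G) [ρ.IsHaarMeasure] [IsProbabilityMeasure ρ]
    {X : Type*} [MeasurableSpace X] [MulAction G X]
    (hact : Measurable fun p : G × X => p.1 • p.2)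
    (μ : Measure X) [IsProbabilityMeasure μ]
    (hinv : ∀ s : G, Measure.map (fun x => s • x) μ = μ)
    (f : X → ℝ) (hf : Integrable f μ) :
    (μ[f | invariantSigma G X]) =ᵐ[μ] fun x => ∫ t, f (t • x) ∂ρ := by
  haveI hRI : ρ.IsMulRightInvariant := haar_right_invariant ρ
  have hm : invariantSigma G X ≤ ‹MeasurableSpace X› := fun s hs => hs.1
  haveI : SigmaFinite (μ.trim hm) :=
    haveI : IsFiniteMeasure (μ.trim hm) := isFiniteMeasure_trim hm
    inferInstance
  set act : G × X → X := fun p => p.1 • p.2 with hact_def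
  set g : X → ℝ := fun x => ∫ t, f (t • x) ∂ρ with hg_def
  -- act pushes ρ ⊗ μ to μ
  have hmap : Measure.map act (ρ.prod μ) = μ := map_smul_prod_eq hact μ hinv
  have hmp : MeasurePreserving act (ρ.prod μ) μ := ⟨hact, hmap⟩
  -- f ∘ act is integrable on the product
  have hfa : AEStronglyMeasurable (f ∘ act) (ρ.prod μ) := by
    have := hf.aestronglyMeasurable
    rw [← hmap] at this
    exact this.comp_measurable hact
  have hint : Integrable (f ∘ act) (ρ.prod μ) := by
    have := hf
    rw [← hmap] at this
    exact (integrable_map_measure (by rw [hmap]; exact hf.aestronglyMeasurable)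
      hact.aemeasurable).mp this
  -- g is integrable
  have hg_int : Integrable g μ := hint.integral_prod_right
  -- g is pointwise invariant
  have hinvg : ∀ (s : G) (x : X), g (s • x) = g x := by
    intro s x
    show (∫ t, f (t • s • x) ∂ρ) = ∫ t, f (t • x) ∂ρ
    rw [← integral_mul_right_eq_self (fun t => f (t • x)) s]
    simp_rw [mul_smul]
  -- set-integral equality on invariant sets
  have hg_eq : ∀ A : Set X, MeasurableSet[invariantSigma G X] A → ∫ x in A, g x ∂μ = ∫ x in A, f x ∂μ := by
    intro A hA
    obtain ⟨hAmeas, hAinv⟩ := hA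
    have hνinv : ∀ t : G, Measure.map (fun x => t • x) (μ.restrict A) = μ.restrict A := by
      intro t
      have ht : Measurable (fun x : X => t • x) := hact.comp measurable_prodMk_left
      have hpre : (fun x : X => t • x) ⁻¹' A = A := by
        rw [Set.preimage_smul]
        exact hAinv t⁻¹
      calc Measure.map (fun x => t • x) (μ.restrict A)
          = Measure.map (fun x => t • x) (μ.restrict ((fun x : X => t • x) ⁻¹' A)) := by
            rw [hpre]
        _ = (Measure.map (fun x => t • x) μ).restrict A := (Measure.restrict_map ht hAmeas).symm
        _ = μ.restrict A := by rw [hinv t]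
    have hmapA : Measure.map act (ρ.prod (μ.restrict A)) = μ.restrict A :=
      map_smul_prod_eq hact (μ.restrict A) hνinv
    have hfA : Integrable f (μ.restrict A) := hf.restrict
    have hintA : Integrable (f ∘ act) (ρ.prod (μ.restrict A)) := by
      have h1 : AEStronglyMeasurable f (Measure.map act (ρ.prod (μ.restrict A))) := by
        rw [hmapA]; exact hfA.aestronglyMeasurable
      have := hfA
      rw [← hmapA] at this
      exact (integrable_map_measure h1 hact.aemeasurable).mp this
    calc ∫ x in A, g x ∂μ
        = ∫ x, ∫ t, f (t • x) ∂ρ ∂(μ.restrict A) := rfl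
      _ = ∫ t, ∫ x, f (t • x) ∂(μ.restrict A) ∂ρ :=
          (integral_integral_swap (f := fun t x => f (t • x)) hintA).symm
      _ = ∫ p, (f ∘ act) p ∂(ρ.prod (μ.restrict A)) :=
          (integral_prod _ hintA).symm
      _ = ∫ y, f y ∂(Measure.map act (ρ.prod (μ.restrict A))) := by
          have h1 : AEStronglyMeasurable f (Measure.map act (ρ.prod (μ.restrict A))) := by
            rw [hmapA]; exact hfA.aestronglyMeasurable
          exact (integral_map hact.aemeasurable h1).symm
      _ = ∫ x, f x ∂(μ.restrict A) := by rw [hmapA]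
  -- g is a.e. invariantSigma-measurable
  have hgm : AEStronglyMeasurable[invariantSigma G X] g μ := by
    set F : G × X → ℝ := hfa.mk (f ∘ act) with hFdef
    have hF : StronglyMeasurable F := hfa.stronglyMeasurable_mk
    have hFeq : f ∘ act =ᵐ[ρ.prod μ] F := hfa.ae_eq_mk
    set g1 : X → ℝ := fun x => ∫ t, F (t, x) ∂ρ with hg1_def
    have hg1 : StronglyMeasurable g1 := hF.integral_prod_left'
    set h : X → ℝ := fun x => ∫ s, g1 (s • x) ∂ρ with hh_def
    have hg1act : StronglyMeasurable (fun p : G × X => g1 (p.1 • p.2)) :=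
      hg1.comp_measurable hact
    have hh_borel : StronglyMeasurable h := hg1act.integral_prod_left'
    have hinvh : ∀ (u : G) (x : X), h (u • x) = h x := by
      intro u x
      show (∫ s, g1 (s • u • x) ∂ρ) = ∫ s, g1 (s • x) ∂ρ
      rw [← integral_mul_right_eq_self (fun s => g1 (s • x)) u]
      simp_rw [mul_smul]
    have hhm : Measurable[invariantSigma G X] h := by
      intro s hs
      refine ⟨hh_borel.measurable hs, fun t => ?_⟩
      ext x
      simp only [Set.mem_smul_set_iff_inv_smul_mem, Set.mem_preimage, hinvh]
    -- h =ᵐ[μ] g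
    have swap_qmp : Measure.QuasiMeasurePreserving Prod.swap (μ.prod ρ) (ρ.prod μ) :=
      (Measure.measurePreserving_swap (μ := μ) (ν := ρ)).quasiMeasurePreserving
    have step1 : ∀ᵐ x ∂μ, ∀ᵐ t ∂ρ, f (t • x) = F (t, x) := by
      have h1 : ∀ᵐ q ∂(μ.prod ρ), f (q.2 • q.1) = F (q.2, q.1) := swap_qmp.ae hFeq
      exact Measure.ae_ae_of_ae_prod h1
    have hg1g : g1 =ᵐ[μ] g := by
      filter_upwards [step1] with x hx
      exact (integral_congr_ae hx).symm
    have step2 : ∀ᵐ x ∂μ, ∀ᵐ s ∂ρ, g1 (s • x) = g (s • x) := by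
      have h1 : ∀ᵐ p ∂(ρ.prod μ), g1 (act p) = g (act p) :=
        hmp.quasiMeasurePreserving.ae hg1g
      have h2 : ∀ᵐ q ∂(μ.prod ρ), g1 (q.2 • q.1) = g (q.2 • q.1) := swap_qmp.ae h1
      exact Measure.ae_ae_of_ae_prod h2
    have hge : h =ᵐ[μ] g := by
      filter_upwards [step2] with x hx
      have : h x = ∫ s, g (s • x) ∂ρ := integral_congr_ae hx
      rw [this]
      simp only [hinvg]
      simp
    exact ⟨h, hhm.stronglyMeasurable, hge.symm⟩
  exact (ae_eq_condExp_of_forall_setIntegral_eq hm hf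
    (fun s hs _ => hg_int.integrableOn) (fun s hs _ => hg_eq s hs) hgm).symm
end
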